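/- arXiv:1206.4485 — 2 statements merged into one kernel-verified Lean document; each statement's English description precedes it below -/
import Mathlib

section
/- Define the P-positions of Wythoff Nim recursively: (x,y) ∈ ℕ₀² is a P-position iff no move from (x,y) leads to a P-position, where the moves from (x,y) are all (x−t,y), (x,y−t), and (x−t,y−t) for t ≥ 1 with nonnegative resulting coordinates. Then (x,y) is a P-position if and only if {x,y} = {⌊φn⌋, ⌊φ²n⌋} for some n ∈ ℕ₀, where φ = (1+√5)/2. -/
noncomputable def phi : ℝ := (1 + Real.sqrt 5) / 2

def WythoffMove (p q : ℕ × ℕ) : Prop :=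
  ∃ t : ℕ, 1 ≤ t ∧
    ((t ≤ p.1 ∧ q = (p.1 - t, p.2)) ∨
     (t ≤ p.2 ∧ q = (p.1, p.2 - t)) ∨
     (t ≤ p.1 ∧ t ≤ p.2 ∧ q = (p.1 - t, p.2 - t)))

namespace WythoffAux

open goldenRatio

lemma phi_eq : phi = Real.goldenRatio := rfl

lemma one_lt_phi : 1 < phi := Real.one_lt_goldenRatio

lemma phi_pos : 0 < phi := Real.goldenRatio_pos

lemma phi_sq : phi ^ 2 = phi + 1 := Real.goldenRatio_sq

lemma phi_irr : Irrational phi := Real.goldenRatio_irrational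

lemma conj : Real.HolderConjugate phi (phi ^ 2) := by
  rw [Real.holderConjugate_iff]
  constructor
  · exact one_lt_phi
  · have h1 : phi ≠ 0 := ne_of_gt phi_pos
    have h2 : phi ^ 2 = phi + 1 := phi_sq
    field_simp
    nlinarith [phi_sq]

/-- `A n = ⌊φ n⌋` -/
noncomputable def A (n : ℕ) : ℕ := ⌊phi * n⌋₊

/-- `B n = ⌊φ² n⌋ = A n + n` -/
noncomputable def B (n : ℕ) : ℕ := A n + n

lemma B_eq (n : ℕ) : ⌊phi ^ 2 * (n : ℝ)⌋₊ = B n := by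
  have h : phi ^ 2 * (n : ℝ) = phi * n + n := by rw [phi_sq]; ring
  rw [h, Nat.floor_add_natCast (mul_nonneg phi_pos.le (Nat.cast_nonneg n))]
  rfl

lemma A_zero : A 0 = 0 := by simp [A]

lemma le_A (n : ℕ) : n ≤ A n := by
  apply Nat.le_floor
  nlinarith [one_lt_phi, Nat.cast_nonneg (α := ℝ) n]

lemma A_strictMono : StrictMono A := by
  apply strictMono_nat_of_lt_succ
  intro n
  have h1 : (⌊phi * n⌋₊ : ℝ) ≤ phi * n :=
    Nat.floor_le (mul_nonneg phi_pos.le (Nat.cast_nonneg n))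
  have : A n + 1 ≤ A (n + 1) := by
    apply Nat.le_floor
    push_cast
    simp only [A]
    nlinarith [one_lt_phi]
  omega

lemma A_lt {m n : ℕ} (h : m < n) : A m < A n := A_strictMono h

lemma B_inj {m n : ℕ} (h : B m = B n) : m = n := by
  rcases lt_trichotomy m n with h' | h' | h'
  · have := A_lt h'; simp [B] at h; omega
  · exact h'
  · have := A_lt h'; simp [B] at h; omega

lemma A_pos_of_pos {n : ℕ} (hn : 1 ≤ n) : 1 ≤ A n := le_trans hn (le_A n)

lemma pos_of_A_pos {n : ℕ} (hn : 1 ≤ A n) : 1 ≤ n := by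
  by_contra h
  have : n = 0 := by omega
  rw [this, A_zero] at hn; omega

-- Bridging to Mathlib's beattySeq
lemma beatty_A (n : ℕ) : beattySeq phi (n : ℤ) = (A n : ℤ) := by
  rw [beattySeq, A, Int.natCast_floor_eq_floor (mul_nonneg phi_pos.le (Nat.cast_nonneg n))]
  congr 1
  push_cast
  ring

lemma beatty_B (n : ℕ) : beattySeq (phi ^ 2) (n : ℤ) = (B n : ℤ) := by
  rw [beattySeq, ← B_eq, Int.natCast_floor_eq_floor
    (mul_nonneg (by positivity : (0:ℝ) ≤ phi ^ 2) (Nat.cast_nonneg n))]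
  congr 1
  push_cast
  ring

open scoped symmDiff in
lemma beatty_mem (m : ℕ) (hm : 1 ≤ m) :
    ((∃ n, 1 ≤ n ∧ A n = m) ∧ ¬ ∃ n, 1 ≤ n ∧ B n = m) ∨
    ((∃ n, 1 ≤ n ∧ B n = m) ∧ ¬ ∃ n, 1 ≤ n ∧ A n = m) := by
  have hsym := Irrational.beattySeq_symmDiff_beattySeq_pos conj phi_irr
  have hmem : (m : ℤ) ∈ {n : ℤ | 0 < n} := by
    simp only [Set.mem_setOf_eq]; exact_mod_cast hm
  rw [← hsym, Set.mem_symmDiff] at hmem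
  have hAiff : (m : ℤ) ∈ {x | ∃ k > 0, beattySeq phi k = x} ↔ ∃ n, 1 ≤ n ∧ A n = m := by
    constructor
    · rintro ⟨k, hk, hkm⟩
      lift k to ℕ using le_of_lt hk
      rw [beatty_A] at hkm
      exact ⟨k, by exact_mod_cast hk, by exact_mod_cast hkm⟩
    · rintro ⟨n, hn, hnm⟩
      exact ⟨(n : ℤ), by exact_mod_cast hn, by rw [beatty_A]; exact_mod_cast hnm⟩
  have hBiff : (m : ℤ) ∈ {x | ∃ k > 0, beattySeq (phi ^ 2) k = x} ↔ ∃ n, 1 ≤ n ∧ B n = m := by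
    constructor
    · rintro ⟨k, hk, hkm⟩
      lift k to ℕ using le_of_lt hk
      rw [beatty_B] at hkm
      exact ⟨k, by exact_mod_cast hk, by exact_mod_cast hkm⟩
    · rintro ⟨n, hn, hnm⟩
      exact ⟨(n : ℤ), by exact_mod_cast hn, by rw [beatty_B]; exact_mod_cast hnm⟩
  rcases hmem with ⟨h1, h2⟩ | ⟨h1, h2⟩
  · exact Or.inl ⟨hAiff.1 h1, fun h => h2 (hBiff.2 h)⟩
  · exact Or.inr ⟨hBiff.1 h1, fun h => h2 (hAiff.2 h)⟩

lemma AB_ne {n m : ℕ} (hn : 1 ≤ n) (hm : 1 ≤ m) : A n ≠ B m := by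
  intro h
  have hBm : 1 ≤ B m := by have := le_A m; simp [B]; omega
  rcases beatty_mem (B m) hBm with ⟨_, h2⟩ | ⟨_, h2⟩
  · exact h2 ⟨m, hm, rfl⟩
  · exact h2 ⟨n, hn, h⟩

/-- The candidate set of P-positions. -/
def S (x y : ℕ) : Prop := ∃ n, (x = A n ∧ y = B n) ∨ (x = B n ∧ y = A n)

lemma S_symm {x y : ℕ} (h : S x y) : S y x := by
  obtain ⟨n, h | h⟩ := h
  · exact ⟨n, Or.inr ⟨h.2, h.1⟩⟩
  · exact ⟨n, Or.inl ⟨h.2, h.1⟩⟩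

lemma S_zero : S 0 0 := ⟨0, Or.inl ⟨A_zero.symm, by simp [B, A_zero]⟩⟩

lemma move_symm {x y u v : ℕ} (h : WythoffMove (x, y) (u, v)) :
    WythoffMove (y, x) (v, u) := by
  obtain ⟨t, ht, h1 | h2 | h3⟩ := h
  · exact ⟨t, ht, Or.inr (Or.inl ⟨h1.1, by simp_all [Prod.ext_iff]⟩)⟩
  · exact ⟨t, ht, Or.inl ⟨h2.1, by simp_all [Prod.ext_iff]⟩⟩
  · exact ⟨t, ht, Or.inr (Or.inr ⟨h3.2.1, h3.1, by simp_all [Prod.ext_iff]⟩)⟩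

lemma move_decr {x y : ℕ} {q : ℕ × ℕ} (h : WythoffMove (x, y) q) :
    q.1 + q.2 < x + y := by
  obtain ⟨t, ht, h1 | h2 | h3⟩ := h
  · rcases h1 with ⟨h, rfl⟩; simp; omega
  · rcases h2 with ⟨h, rfl⟩; simp; omega
  · rcases h3 with ⟨h, h', rfl⟩; simp; omega

lemma noP_aux (n u v : ℕ) (hmv : WythoffMove (A n, B n) (u, v)) : ¬ S u v := by
  rintro ⟨m, hm⟩
  obtain ⟨t, ht, h1 | h2 | h3⟩ := hmv
  · -- remove from first pile: (A n - t, B n)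
    obtain ⟨htn, heq⟩ := h1
    simp only [Prod.ext_iff] at heq
    obtain ⟨hu, hv⟩ := heq
    rcases hm with ⟨hm1, hm2⟩ | ⟨hm1, hm2⟩
    · -- u = A m, v = B m, so B m = B n, m = n, A n - t = A n
      have hmn : m = n := B_inj (by omega)
      subst hmn
      omega
    · -- u = B m, v = A m, so A m = B n : disjointness
      have hn1 : 1 ≤ n := pos_of_A_pos (by omega)
      have hm1' : 1 ≤ m := by
        apply pos_of_A_pos
        have : 1 ≤ B n := by simp [B]; omega
        omega
      exact AB_ne hm1' hn1 (by omega)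
  · -- remove from second pile: (A n, B n - t)
    obtain ⟨htn, heq⟩ := h2
    simp only [Prod.ext_iff] at heq
    obtain ⟨hu, hv⟩ := heq
    rcases hm with ⟨hm1, hm2⟩ | ⟨hm1, hm2⟩
    · -- A n = A m, B n - t = B m
      have hmn : n = m := A_strictMono.injective (by omega)
      subst hmn
      omega
    · -- A n = B m, B n - t = A m
      rcases Nat.eq_zero_or_pos m with hm0 | hm0
      · subst hm0
        have hB0 : B 0 = 0 := by simp [B, A_zero]
        have hn0 : n = 0 := by have := le_A n; omega
        subst hn0
        omega
      · rcases Nat.eq_zero_or_pos n with hn0 | hn0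
        · subst hn0
          have := le_A m
          have hA0 : A 0 = 0 := A_zero
          simp only [B] at hm1
          omega
        · exact AB_ne hn0 hm0 (by omega)
  · -- diagonal: (A n - t, B n - t)
    obtain ⟨htn, htn', heq⟩ := h3
    simp only [Prod.ext_iff] at heq
    obtain ⟨hu, hv⟩ := heq
    rcases hm with ⟨hm1, hm2⟩ | ⟨hm1, hm2⟩
    · -- A n - t = A m, B n - t = B m ⟹ m = n ⟹ contradiction
      simp only [B] at hm2 hv htn'
      have hmn : m = n := by omega
      subst hmn
      omega
    · -- A n - t = B m, B n - t = A m ⟹ n + m = 0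
      simp only [B] at hm1 hm2 hv htn'
      have hn0 : n = 0 := by omega
      subst hn0
      simp [A_zero] at htn
      omega

lemma noP {x y u v : ℕ} (hS : S x y) (hmv : WythoffMove (x, y) (u, v)) : ¬ S u v := by
  obtain ⟨n, ⟨rfl, rfl⟩ | ⟨rfl, rfl⟩⟩ := hS
  · exact noP_aux n u v hmv
  · intro h
    exact noP_aux n v u (move_symm hmv) (S_symm h)

lemma exMove_le {x y : ℕ} (hxy : x ≤ y) (hS : ¬ S x y) :
    ∃ u v, WythoffMove (x, y) (u, v) ∧ S u v := by
  rcases Nat.eq_zero_or_pos x with hx0 | hx0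
  · subst hx0
    have hy : 1 ≤ y := by
      rcases Nat.eq_zero_or_pos y with h | h
      · exact absurd (h ▸ S_zero) hS
      · exact h
    refine ⟨0, 0, ⟨y, hy, Or.inr (Or.inl ⟨le_refl y, by simp⟩)⟩, S_zero⟩
  · rcases beatty_mem x hx0 with ⟨⟨n, hn1, hAn⟩, _⟩ | ⟨⟨m, hm1, hBm⟩, _⟩
    · -- x = A n
      rcases lt_trichotomy y (B n) with hy | hy | hy
      · -- diagonal move to (A d, B d) with d = y - x
        set d := y - x with hd
        have hdn : d < n := by simp only [B] at hy; omega
        have hAd : A d < A n := A_lt hdn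
        refine ⟨A d, B d, ⟨x - A d, by omega,
          Or.inr (Or.inr ⟨by omega, by omega, ?_⟩)⟩, ⟨d, Or.inl ⟨rfl, rfl⟩⟩⟩
        simp only [Prod.ext_iff]
        constructor
        · omega
        · simp only [B]; omega
      · exact absurd ⟨n, Or.inl ⟨hAn.symm, hy⟩⟩ hS
      · -- remove y - B n from second pile
        refine ⟨x, B n, ⟨y - B n, by omega,
          Or.inr (Or.inl ⟨by omega, ?_⟩)⟩, ⟨n, Or.inl ⟨hAn.symm, rfl⟩⟩⟩
        simp [Prod.ext_iff]
        omega
    · -- x = B m, move second pile to A m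
      have hAm : A m < x := by simp [B] at hBm; omega
      refine ⟨x, A m, ⟨y - A m, by omega,
        Or.inr (Or.inl ⟨by omega, ?_⟩)⟩, ⟨m, Or.inr ⟨hBm.symm, rfl⟩⟩⟩
      simp [Prod.ext_iff]
      omega

lemma exMove {x y : ℕ} (hS : ¬ S x y) :
    ∃ u v, WythoffMove (x, y) (u, v) ∧ S u v := by
  rcases le_total x y with h | h
  · exact exMove_le h hS
  · obtain ⟨u, v, hmv, hSuv⟩ := exMove_le h (fun hs => hS (S_symm hs))
    exact ⟨v, u, move_symm hmv, S_symm hSuv⟩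

end WythoffAux

open WythoffAux in
theorem wythoff_P_positions (P : ℕ × ℕ → Prop)
    (hP : ∀ p, P p ↔ ∀ q, WythoffMove p q → ¬ P q) :
    ∀ x y : ℕ, P (x, y) ↔
      ∃ n : ℕ, (x = ⌊phi * n⌋₊ ∧ y = ⌊phi ^ 2 * n⌋₊) ∨
               (x = ⌊phi ^ 2 * n⌋₊ ∧ y = ⌊phi * n⌋₊) := by
  have key : ∀ s : ℕ, ∀ x y : ℕ, x + y = s → (P (x, y) ↔ S x y) := by
    intro s
    induction s using Nat.strong_induction_on with
    | _ s ih =>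
      intro x y hs
      subst hs
      rw [hP]
      constructor
      · intro h
        by_contra hS
        obtain ⟨u, v, hmv, hSuv⟩ := exMove hS
        have hlt : u + v < x + y := by simpa using move_decr hmv
        exact h _ hmv ((ih _ hlt u v rfl).2 hSuv)
      · intro hS q hmv hPq
        obtain ⟨u, v⟩ := q
        have hlt : u + v < x + y := by simpa using move_decr hmv
        exact noP hS hmv ((ih _ hlt u v rfl).1 hPq)
  intro x y
  rw [key (x + y) x y rfl]
  simp only [S, A, ← B_eq]
end

section
/- Suppose a set of positions {(a_{k_i}, b_{k_i}) : i ≥ 1} ⊂ ℕ × ℕ satisfies b_{k_{i+1}} = 2(a_{k_{i+1}} − a_{k_i}) + b_{k_i} + 1 for all i, with b_{k_1} = 2a_{k_1} + 1 and a_{k_i} strictly increasing. Fix N ∈ ℕ and suppose #{i : a_{k_i} < N} ≥ m. Then for each x with 1 ≤ x ≤ m, there exists i with a_{k_i} < N such that (N, 2N + x) can reach (a_{k_i}, b_{k_i}) by subtracting (t, 2t) for some t ≥ 1, i.e., N − a_{k_i} = t and 2N + x − b_{k_i} = 2t. -/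
theorem sector_reaches_P (a b : ℕ → ℕ)
    (ha_pos : ∀ i, 1 ≤ i → 0 < a i)
    (ha_mono : ∀ i, 1 ≤ i → a i < a (i + 1))
    (hb1 : b 1 = 2 * a 1 + 1)
    (hrec : ∀ i, 1 ≤ i → b (i + 1) = 2 * (a (i + 1) - a i) + b i + 1)
    (N m : ℕ) (hN : 0 < N)
    (hcount : m ≤ {i : ℕ | 1 ≤ i ∧ a i < N}.ncard) :
    ∀ x : ℕ, 1 ≤ x → x ≤ m →
      ∃ i, 1 ≤ i ∧ a i < N ∧
        ∃ t : ℕ, 1 ≤ t ∧ N = a i + t ∧ 2 * N + x = b i + 2 * t := by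
  -- monotonicity of a on indices ≥ 1
  have hmono : ∀ i j, 1 ≤ i → i ≤ j → a i ≤ a j := by
    intro i j hi hij
    induction j with
    | zero => omega
    | succ n ih =>
      rcases Nat.lt_or_ge i (n+1) with h | h
      · have hn : i ≤ n := by omega
        exact le_trans (ih hn) (le_of_lt (ha_mono n (by omega)))
      · have : i = n + 1 := by omega
        subst this; exact le_rfl
  -- closed form: b i = 2 * a i + i for i ≥ 1
  have hb : ∀ i, 1 ≤ i → b i = 2 * a i + i := by
    intro i hi
    induction i with
    | zero => omega
    | succ n ih =>
      rcases Nat.lt_or_ge 1 (n+1) with h | h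
      · have hn : 1 ≤ n := by omega
        have := hrec n hn
        have hle : a n ≤ a (n+1) := le_of_lt (ha_mono n hn)
        rw [ih hn] at this
        omega
      · have : n = 0 := by omega
        subst this; simpa using hb1
  intro x hx hxm
  -- show a x < N
  have hax : a x < N := by
    by_contra hax
    push_neg at hax
    have hsub : {i : ℕ | 1 ≤ i ∧ a i < N} ⊆ ↑(Finset.Ico 1 x) := by
      intro i hi
      simp only [Set.mem_setOf_eq] at hi
      simp only [Finset.coe_Ico, Set.mem_Ico]
      refine ⟨hi.1, ?_⟩
      by_contra hix
      push_neg at hix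
      exact absurd (lt_of_le_of_lt (le_trans hax (hmono x i hx hix)) hi.2) (lt_irrefl N)
    have hcard := Set.ncard_le_ncard hsub (Finset.Ico 1 x).finite_toSet
    rw [Set.ncard_coe_finset, Nat.card_Ico] at hcard
    omega
  refine ⟨x, hx, hax, N - a x, by omega, by omega, ?_⟩
  have := hb x hx
  omega
end
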